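/- Let X and Y be Banach spaces, with Y a closed subspace of X. Let g : X → Y be a Lipschitz map with Lipschitz constant α such that lim_{n→∞} g(n·y)/n = y for every y ∈ Y. Let 𝒰 be a free ultrafilter on ℕ and define P : X → Y** by P(x) = weak*-lim_{𝒰} g(n·x)/n (the limit exists by Banach–Alaoglu since the sequence is bounded in Y ⊆ Y**). Then P is a Lipschitz map with Lipschitz constant at most α, and P(y) = j(y) for all y ∈ Y, where j : Y → Y** is the canonical embedding. -/

import Mathlib

open Filter NormedSpace

/-- The topological dual of a seminormed space `E`, as `NormedSpace.Dual` was defined in the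
older Mathlib (now `StrongDual`, whose topology on `E` is found by another route). -/
abbrev Dual (𝕜 : Type*) [NontriviallyNormedField 𝕜] (E : Type*) [SeminormedAddCommGroup E]
    [NormedSpace 𝕜 E] : Type _ :=
  StrongDual 𝕜 E

/-- if `g : X → Y` is `α`-Lipschitz with `g (n • y)/n → y` for every
`y ∈ Y`, `𝒰` is a free ultrafilter on `ℕ`, and `P : X → Y**` assigns to each `x`
the weak* limit of `g (n • x)/n` along `𝒰`, then `P` is `α`-Lipschitz and `P`
agrees with the canonical embedding `j : Y → Y**` on `Y`. -/
theorem stmt2 {X : Type*} [NormedAddCommGroup X] [NormedSpace ℝ X] [CompleteSpace X]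
    (Y : Subspace ℝ X) (hYc : IsClosed (Y : Set X))
    (g : X → Y) (α : NNReal) (hg : LipschitzWith α g)
    (hlim : ∀ y : Y, Tendsto (fun n : ℕ => ((n : ℝ)⁻¹ : ℝ) • g ((n : ℝ) • (y : X)))
      atTop (nhds y))
    (𝒰 : Ultrafilter ℕ) (h𝒰 : (𝒰 : Filter ℕ) ≤ Filter.cofinite)
    (P : X → Dual ℝ (Dual ℝ Y))
    (hP : ∀ (x : X) (φ : Dual ℝ Y),
      Tendsto (fun n : ℕ => ((n : ℝ)⁻¹ : ℝ) * φ (g ((n : ℝ) • x)))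
        (𝒰 : Filter ℕ) (nhds (P x φ))) :
    LipschitzWith α P ∧ ∀ y : Y, P y = inclusionInDoubleDual ℝ Y y := by
  constructor
  · -- Lipschitz
    apply LipschitzWith.of_dist_le_mul
    intro x x'
    rw [dist_eq_norm, dist_eq_norm]
    have key : ∀ φ : Dual ℝ Y, ‖(P x - P x') φ‖ ≤ (α * ‖x - x'‖) * ‖φ‖ := by
      intro φ
      have hdiff : Tendsto (fun n : ℕ =>
          ((n : ℝ)⁻¹ : ℝ) * φ (g ((n : ℝ) • x)) - ((n : ℝ)⁻¹ : ℝ) * φ (g ((n : ℝ) • x')))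
          (𝒰 : Filter ℕ) (nhds (P x φ - P x' φ)) := (hP x φ).sub (hP x' φ)
      have hb : ∀ n : ℕ, ‖((n : ℝ)⁻¹ : ℝ) * φ (g ((n : ℝ) • x)) -
          ((n : ℝ)⁻¹ : ℝ) * φ (g ((n : ℝ) • x'))‖ ≤ (α * ‖x - x'‖) * ‖φ‖ := by
        intro n
        rcases Nat.eq_zero_or_pos n with rfl | hn
        · simp
          positivity
        · rw [← mul_sub, ← map_sub]
          have h1 : ‖φ (g ((n : ℝ) • x) - g ((n : ℝ) • x'))‖
              ≤ ‖φ‖ * ‖g ((n : ℝ) • x) - g ((n : ℝ) • x')‖ := φ.le_opNorm _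
          have h2 : ‖g ((n : ℝ) • x) - g ((n : ℝ) • x')‖ ≤ α * (n * ‖x - x'‖) := by
            have := hg.dist_le_mul ((n : ℝ) • x) ((n : ℝ) • x')
            rw [dist_eq_norm, dist_eq_norm, ← smul_sub, norm_smul] at this
            simpa [abs_of_nonneg (by positivity : (0:ℝ) ≤ (n:ℝ))] using this
          rw [norm_mul, norm_inv, Real.norm_natCast]
          calc (n : ℝ)⁻¹ * ‖φ (g ((n : ℝ) • x) - g ((n : ℝ) • x'))‖
              ≤ (n : ℝ)⁻¹ * (‖φ‖ * (α * (n * ‖x - x'‖))) := by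
                apply mul_le_mul_of_nonneg_left _ (by positivity)
                exact h1.trans (by gcongr)
            _ = ((n : ℝ)⁻¹ * n) * (α * ‖x - x'‖ * ‖φ‖) := by ring
            _ = (α * ‖x - x'‖) * ‖φ‖ := by
                rw [inv_mul_cancel₀ (by exact_mod_cast hn.ne')]; ring
      exact le_of_tendsto' (hdiff.norm) (fun n => hb n)
    have : ‖P x - P x'‖ ≤ α * ‖x - x'‖ :=
      ContinuousLinearMap.opNorm_le_bound _ (by positivity) key
    exact this
  · intro y
    ext φ
    have h1 : Tendsto (fun n : ℕ => ((n : ℝ)⁻¹ : ℝ) * φ (g ((n : ℝ) • (y : X))))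
        (𝒰 : Filter ℕ) (nhds (φ y)) := by
      have h0 := ((φ.continuous.tendsto y).comp (hlim y)).mono_left
        (h𝒰.trans (le_of_eq Nat.cofinite_eq_atTop))
      simpa [Function.comp_def, map_smul, smul_eq_mul] using h0
    have := tendsto_nhds_unique (hP y φ) h1
    rw [this, dual_def]
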